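/- arXiv:1710.08106 — 4 statements merged into one kernel-verified Lean document; each statement's English description precedes it below -/
import Mathlib

section
/- For every smooth function f : ℝ^d → ℝ, the intertwining identity A ∇(L f) = 𝕃_A (A ∇f) − M_A (A ∇f) holds pointwise on ℝ^d. -/
open Real MeasureTheory Matrix

noncomputable section

abbrev Euc (d : ℕ) := Fin d → ℝ

/-- partial derivative in direction `i`. -/
def pd {d : ℕ} (i : Fin d) (f : Euc d → ℝ) (x : Euc d) : ℝ :=
  fderiv ℝ f x (Pi.single i 1)

/-- Euclidean gradient. -/
def gradv {d : ℕ} (f : Euc d → ℝ) (x : Euc d) : Euc d := fun i => pd i f x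

/-- The diffusion operator `L f = Δ f - ∇V ⋅ ∇f`. -/
def Lop {d : ℕ} (V f : Euc d → ℝ) (x : Euc d) : ℝ :=
  (∑ i, pd i (pd i f) x) - gradv V x ⬝ᵥ gradv f x

/-- Hessian matrix. -/
def hessM {d : ℕ} (V : Euc d → ℝ) (x : Euc d) : Matrix (Fin d) (Fin d) ℝ :=
  Matrix.of fun i j => pd i (pd j V) x

/-- Componentwise application of `L` to a vector field. -/
def vecL {d : ℕ} (V : Euc d → ℝ) (F : Euc d → Euc d) (x : Euc d) : Euc d :=
  fun i => Lop V (fun y => F y i) x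

/-- Entrywise application of `L` to a matrix field. -/
def matL {d : ℕ} (V : Euc d → ℝ) (M : Euc d → Matrix (Fin d) (Fin d) ℝ) (x : Euc d) :
    Matrix (Fin d) (Fin d) ℝ :=
  Matrix.of fun i j => Lop V (fun y => M y i j) x

/-- Jacobian matrix of a vector field: `(jac H x) i j = ∂_j H_i (x)`. -/
def jac {d : ℕ} (H : Euc d → Euc d) (x : Euc d) : Matrix (Fin d) (Fin d) ℝ :=
  Matrix.of fun i j => pd j (fun y => H y i) x

/-- `(∇A⁻¹ ∇F)_i = ∑_{j,k} ∂_k (A⁻¹)_{i,j} ∂_k F_j`. -/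
def gAinvG {d : ℕ} (A : Euc d → Matrix (Fin d) (Fin d) ℝ) (F : Euc d → Euc d) (x : Euc d) :
    Euc d :=
  fun i => ∑ j, ∑ k, pd k (fun y => (A y)⁻¹ i j) x * pd k (fun y => F y j) x

/-- The operator `𝕃_A F = 𝕃 F + 2 A ∇A⁻¹ ∇F`. -/
def LA {d : ℕ} (V : Euc d → ℝ) (A : Euc d → Matrix (Fin d) (Fin d) ℝ) (F : Euc d → Euc d)
    (x : Euc d) : Euc d :=
  vecL V F x + (2 : ℝ) • (A x *ᵥ gAinvG A F x)

/-- The matrix field `M_A = A (∇²V) A⁻¹ - A (𝕃 A⁻¹)`. -/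
def MA {d : ℕ} (V : Euc d → ℝ) (A : Euc d → Matrix (Fin d) (Fin d) ℝ) (x : Euc d) :
    Matrix (Fin d) (Fin d) ℝ :=
  A x * hessM V x * (A x)⁻¹ - A x * matL V (fun y => (A y)⁻¹) x

/-- The Schrödinger-type operator `𝕃_A^{M_A} F = 𝕃_A F - M_A F`. -/
def LAM {d : ℕ} (V : Euc d → ℝ) (A : Euc d → Matrix (Fin d) (Fin d) ℝ) (F : Euc d → Euc d)
    (x : Euc d) : Euc d :=
  LA V A F x - MA V A x *ᵥ F x

/-- The matrix field `S = (A Aᵀ)⁻¹`. -/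
def Smat {d : ℕ} (A : Euc d → Matrix (Fin d) (Fin d) ℝ) (x : Euc d) :
    Matrix (Fin d) (Fin d) ℝ :=
  (A x * (A x)ᵀ)⁻¹

/-- The probability measure with density proportional to `e^{-V}`. -/
def gibbs {d : ℕ} (V : Euc d → ℝ) : Measure (Euc d) :=
  (ENNReal.ofReal (∫ x, Real.exp (-V x)))⁻¹ •
    MeasureTheory.volume.withDensity fun x => ENNReal.ofReal (Real.exp (-V x))

/-- Variance with respect to a measure. -/
def Var' {d : ℕ} (μ : Measure (Euc d)) (f : Euc d → ℝ) : ℝ :=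
  (∫ x, f x ^ 2 ∂μ) - (∫ x, f x ∂μ) ^ 2

/-! ### Auxiliary calculus lemmas -/

section helpers

variable {d : ℕ}

lemma topCast : ((⊤:ℕ∞) : WithTop ℕ∞) + 1 ≤ ((⊤:ℕ∞) : WithTop ℕ∞) := by exact_mod_cast le_top

lemma ContDiff.diffR {F : Type*} [NormedAddCommGroup F] [NormedSpace ℝ F] {f : Euc d → F}
    (hf : ContDiff ℝ (⊤ : ℕ∞) f) : Differentiable ℝ f :=
  hf.differentiable (by norm_cast)

lemma contDiff_pd {f : Euc d → ℝ} (hf : ContDiff ℝ (⊤ : ℕ∞) f) (i : Fin d) :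
    ContDiff ℝ (⊤ : ℕ∞) (pd i f) :=
  (hf.fderiv_right topCast).clm_apply contDiff_const

lemma pd_const (i : Fin d) (c : ℝ) (x : Euc d) : pd i (fun _ => c) x = 0 := by
  simp [pd, fderiv_const]

lemma pd_add {x : Euc d} {f g : Euc d → ℝ} (hf : DifferentiableAt ℝ f x)
    (hg : DifferentiableAt ℝ g x) (i : Fin d) :
    pd i (fun y => f y + g y) x = pd i f x + pd i g x := by
  simp [pd, fderiv_fun_add hf hg]

lemma pd_sub {x : Euc d} {f g : Euc d → ℝ} (hf : DifferentiableAt ℝ f x)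
    (hg : DifferentiableAt ℝ g x) (i : Fin d) :
    pd i (fun y => f y - g y) x = pd i f x - pd i g x := by
  simp [pd, fderiv_fun_sub hf hg]

lemma pd_mul {x : Euc d} {f g : Euc d → ℝ} (hf : DifferentiableAt ℝ f x)
    (hg : DifferentiableAt ℝ g x) (i : Fin d) :
    pd i (fun y => f y * g y) x = f x * pd i g x + g x * pd i f x := by
  simp [pd, fderiv_fun_mul hf hg]

lemma pd_sum {ι : Type*} (s : Finset ι) {F : ι → Euc d → ℝ} {x : Euc d}
    (hF : ∀ j ∈ s, DifferentiableAt ℝ (F j) x) (i : Fin d) :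
    pd i (fun y => ∑ j ∈ s, F j y) x = ∑ j ∈ s, pd i (F j) x := by
  simp [pd, fderiv_fun_sum hF]

lemma pd_snd {f : Euc d → ℝ} (hf : ContDiff ℝ (⊤ : ℕ∞) f) (i j : Fin d) (x : Euc d) :
    pd i (pd j f) x = fderiv ℝ (fderiv ℝ f) x (Pi.single i 1) (Pi.single j 1) := by
  have hdf : ContDiff ℝ (⊤ : ℕ∞) (fderiv ℝ f) := hf.fderiv_right topCast
  have h1 : DifferentiableAt ℝ (fderiv ℝ f) x := hdf.diffR x
  have h2 : pd j f = fun y => fderiv ℝ f y (Pi.single j 1) := rfl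
  rw [pd, h2, fderiv_clm_apply h1 (differentiableAt_const _)]
  simp

lemma pd_comm {f : Euc d → ℝ} (hf : ContDiff ℝ (⊤ : ℕ∞) f) (i j : Fin d) (x : Euc d) :
    pd i (pd j f) x = pd j (pd i f) x := by
  rw [pd_snd hf, pd_snd hf]
  exact second_derivative_symmetric (fun y => (hf.diffR y).hasFDerivAt)
    (((hf.fderiv_right topCast).diffR x).hasFDerivAt) _ _

lemma Lop_eq' (V f : Euc d → ℝ) (x : Euc d) :
    Lop V f x = ∑ i, (pd i (pd i f) x - pd i V x * pd i f x) := by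
  simp [Lop, gradv, dotProduct, Finset.sum_sub_distrib]

lemma Lop_const (V : Euc d → ℝ) (c : ℝ) (x : Euc d) : Lop V (fun _ => c) x = 0 := by
  have h : ∀ i : Fin d, pd i (fun _ : Euc d => c) = fun _ => (0:ℝ) :=
    fun i => funext fun y => pd_const i c y
  rw [Lop_eq']
  simp [h, pd_const]

lemma Lop_sum (V : Euc d → ℝ) {ι : Type*} (s : Finset ι) {F : ι → Euc d → ℝ}
    (hF : ∀ j ∈ s, ContDiff ℝ (⊤ : ℕ∞) (F j)) (x : Euc d) :
    Lop V (fun y => ∑ j ∈ s, F j y) x = ∑ j ∈ s, Lop V (F j) x := by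
  have h1 : ∀ i : Fin d, pd i (fun y => ∑ j ∈ s, F j y) = fun y => ∑ j ∈ s, pd i (F j) y :=
    fun i => funext fun y => pd_sum s (fun j hj => (hF j hj).diffR y) i
  calc Lop V (fun y => ∑ j ∈ s, F j y) x
      = ∑ i, ∑ j ∈ s, (pd i (pd i (F j)) x - pd i V x * pd i (F j) x) := by
        rw [Lop_eq']
        refine Finset.sum_congr rfl fun i _ => ?_
        have e1 : pd i (pd i (fun y => ∑ j ∈ s, F j y)) x = ∑ j ∈ s, pd i (pd i (F j)) x := by
          rw [h1 i]; exact pd_sum s (fun j hj => (contDiff_pd (hF j hj) i).diffR x) i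
        have e2 : pd i (fun y => ∑ j ∈ s, F j y) x = ∑ j ∈ s, pd i (F j) x :=
          pd_sum s (fun j hj => (hF j hj).diffR x) i
        rw [e1, e2, Finset.mul_sum, ← Finset.sum_sub_distrib]
    _ = ∑ j ∈ s, ∑ i, (pd i (pd i (F j)) x - pd i V x * pd i (F j) x) := Finset.sum_comm
    _ = ∑ j ∈ s, Lop V (F j) x :=
        Finset.sum_congr rfl fun j _ => (Lop_eq' V (F j) x).symm

lemma Lop_mul (V : Euc d → ℝ) {u v : Euc d → ℝ} (hu : ContDiff ℝ (⊤ : ℕ∞) u)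
    (hv : ContDiff ℝ (⊤ : ℕ∞) v) (x : Euc d) :
    Lop V (fun y => u y * v y) x
      = u x * Lop V v x + v x * Lop V u x + 2 * ∑ k, pd k u x * pd k v x := by
  have h1 : ∀ k : Fin d, pd k (fun y => u y * v y)
      = fun y => u y * pd k v y + v y * pd k u y :=
    fun k => funext fun y => pd_mul (hu.diffR y) (hv.diffR y) k
  have key : ∀ k : Fin d,
      pd k (pd k (fun y => u y * v y)) x - pd k V x * pd k (fun y => u y * v y) x
        = u x * (pd k (pd k v) x - pd k V x * pd k v x)
          + v x * (pd k (pd k u) x - pd k V x * pd k u x)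
          + 2 * (pd k u x * pd k v x) := by
    intro k
    have h2 : pd k (pd k (fun y => u y * v y)) x
        = (u x * pd k (pd k v) x + pd k v x * pd k u x)
          + (v x * pd k (pd k u) x + pd k u x * pd k v x) := by
      rw [h1 k]
      rw [pd_add ((hu.diffR x).fun_mul ((contDiff_pd hv k).diffR x))
        ((hv.diffR x).fun_mul ((contDiff_pd hu k).diffR x)) k,
        pd_mul (hu.diffR x) ((contDiff_pd hv k).diffR x) k,
        pd_mul (hv.diffR x) ((contDiff_pd hu k).diffR x) k]
    rw [h2, pd_mul (hu.diffR x) (hv.diffR x) k]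
    ring
  calc Lop V (fun y => u y * v y) x
      = ∑ k, (u x * (pd k (pd k v) x - pd k V x * pd k v x)
          + v x * (pd k (pd k u) x - pd k V x * pd k u x)
          + 2 * (pd k u x * pd k v x)) := by
        rw [Lop_eq']
        exact Finset.sum_congr rfl fun k _ => key k
    _ = u x * Lop V v x + v x * Lop V u x + 2 * ∑ k, pd k u x * pd k v x := by
        rw [Finset.sum_add_distrib, Finset.sum_add_distrib, ← Finset.mul_sum, ← Finset.mul_sum,
          ← Finset.mul_sum, ← Lop_eq', ← Lop_eq']

/-- base intertwining: `∂_i (L f) = L (∂_i f) - (Hess V ∇f)_i`. -/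
lemma pd_Lop {V f : Euc d → ℝ} (hV : ContDiff ℝ (⊤ : ℕ∞) V) (hf : ContDiff ℝ (⊤ : ℕ∞) f)
    (i : Fin d) (x : Euc d) :
    pd i (Lop V f) x = Lop V (pd i f) x - ∑ k, pd i (pd k V) x * pd k f x := by
  have hLf : Lop V f = fun y => ∑ k, (pd k (pd k f) y - pd k V y * pd k f y) :=
    funext fun y => Lop_eq' V f y
  have hdterm : ∀ (k : Fin d) (y : Euc d),
      DifferentiableAt ℝ (fun z => pd k (pd k f) z - pd k V z * pd k f z) y := by
    intro k y
    exact ((contDiff_pd (contDiff_pd hf k) k).diffR y).sub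
      (((contDiff_pd hV k).diffR y).mul ((contDiff_pd hf k).diffR y))
  rw [hLf, pd_sum Finset.univ (fun k _ => hdterm k x) i]
  have step : ∀ k : Fin d,
      pd i (fun z => pd k (pd k f) z - pd k V z * pd k f z) x
        = (pd k (pd k (pd i f)) x - pd k V x * pd k (pd i f) x) - pd i (pd k V) x * pd k f x := by
    intro k
    rw [pd_sub ((contDiff_pd (contDiff_pd hf k) k).diffR x)
      (((contDiff_pd hV k).diffR x).fun_mul ((contDiff_pd hf k).diffR x)) i,
      pd_mul ((contDiff_pd hV k).diffR x) ((contDiff_pd hf k).diffR x) i]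
    have c1 : pd i (pd k (pd k f)) x = pd k (pd k (pd i f)) x := by
      rw [pd_comm (contDiff_pd hf k) i k x]
      have c2 : pd i (pd k f) = pd k (pd i f) := funext fun y => pd_comm hf i k y
      rw [c2]
    rw [c1, pd_comm hf i k x]
    ring
  rw [Finset.sum_congr rfl fun k _ => step k, Finset.sum_sub_distrib, ← Lop_eq']

lemma contDiff_det {M : Euc d → Matrix (Fin d) (Fin d) ℝ}
    (hM : ∀ i j, ContDiff ℝ (⊤ : ℕ∞) fun y => M y i j) :
    ContDiff ℝ (⊤ : ℕ∞) fun y => (M y).det := by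
  simp only [Matrix.det_apply]
  apply ContDiff.sum
  intro σ _
  simp only [Units.smul_def, zsmul_eq_mul]
  exact contDiff_const.mul (contDiff_prod fun i _ => hM (σ i) i)

lemma contDiff_inv_entry {A : Euc d → Matrix (Fin d) (Fin d) ℝ}
    (hA : ∀ i j, ContDiff ℝ (⊤ : ℕ∞) fun x => A x i j)
    (hAinv : ∀ x, IsUnit (A x).det) (i j : Fin d) :
    ContDiff ℝ (⊤ : ℕ∞) fun y => (A y)⁻¹ i j := by
  have hdet : ContDiff ℝ (⊤ : ℕ∞) fun y => (A y).det := contDiff_det hA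
  have hne : ∀ y, (A y).det ≠ 0 := fun y => (hAinv y).ne_zero
  have hadj : ContDiff ℝ (⊤ : ℕ∞) fun y => (A y).adjugate i j := by
    simp only [Matrix.adjugate_apply]
    apply contDiff_det
    intro k l
    by_cases h : k = j <;> simp [Matrix.updateRow_apply, h]
    · exact contDiff_const
    · exact hA k l
  have heq : (fun y => (A y)⁻¹ i j) = fun y => ((A y).det)⁻¹ * (A y).adjugate i j := by
    funext y
    rw [Matrix.inv_def, Matrix.smul_apply, Ring.inverse_eq_inv', smul_eq_mul]
  rw [heq]
  exact (hdet.inv hne).mul hadj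

lemma mulVec_sumFin {n : ℕ} (M : Matrix (Fin d) (Fin d) ℝ) (w : Fin n → Euc d) :
    M *ᵥ (∑ k, w k) = ∑ k, M *ᵥ w k := by
  funext i
  simp [Matrix.mulVec, dotProduct, Finset.mul_sum, Finset.sum_apply]
  rw [Finset.sum_comm]

lemma sumFin_mulVec {n : ℕ} (M : Fin n → Matrix (Fin d) (Fin d) ℝ) (v : Euc d) :
    (∑ k, M k) *ᵥ v = ∑ k, M k *ᵥ v := by
  funext i
  simp [Matrix.mulVec, dotProduct, Matrix.sum_apply, Finset.sum_mul, Finset.sum_apply]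
  rw [Finset.sum_comm]

end helpers

/-- the intertwining identity `A ∇(L f) = 𝕃_A(A∇f) - M_A (A∇f)` holds pointwise. -/
theorem stmt_0 {d : ℕ} (hd : 1 ≤ d) (V : Euc d → ℝ) (hV : ContDiff ℝ (⊤ : ℕ∞) V)
    (A : Euc d → Matrix (Fin d) (Fin d) ℝ)
    (hA : ∀ i j, ContDiff ℝ (⊤ : ℕ∞) fun x => A x i j)
    (hAinv : ∀ x, IsUnit (A x).det)
    (f : Euc d → ℝ) (hf : ContDiff ℝ (⊤ : ℕ∞) f) (x : Euc d) :
    A x *ᵥ gradv (Lop V f) x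
      = LA V A (fun y => A y *ᵥ gradv f y) x - MA V A x *ᵥ (A x *ᵥ gradv f x) := by
  classical
  have hb : ∀ i j, ContDiff ℝ (⊤ : ℕ∞) fun y => (A y)⁻¹ i j :=
    contDiff_inv_entry hA hAinv
  have hg : ∀ m, ContDiff ℝ (⊤ : ℕ∞) (pd m f) := fun m => contDiff_pd hf m
  set P : Matrix (Fin d) (Fin d) ℝ := A x with hPdef
  set Q : Matrix (Fin d) (Fin d) ℝ := (A x)⁻¹ with hQdef
  set D : Fin d → Matrix (Fin d) (Fin d) ℝ :=
    fun k => Matrix.of fun i j => pd k (fun y => A y i j) x with hDdef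
  set E : Fin d → Matrix (Fin d) (Fin d) ℝ :=
    fun k => Matrix.of fun i j => pd k (fun y => (A y)⁻¹ i j) x with hEdef
  set La : Matrix (Fin d) (Fin d) ℝ :=
    Matrix.of fun i j => Lop V (fun y => A y i j) x with hLadef
  set Lb : Matrix (Fin d) (Fin d) ℝ := matL V (fun y => (A y)⁻¹) x with hLbdef
  set gv : Euc d := gradv f x with hgvdef
  set hk : Fin d → Euc d := fun k m => pd k (pd m f) x with hhkdef
  set Lg : Euc d := fun j => Lop V (pd j f) x with hLgdef
  set H : Matrix (Fin d) (Fin d) ℝ := hessM V x with hHdef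
  -- the relation AA⁻¹ = 1 as scalar functions
  have hrel1 : ∀ i j, (fun y => ∑ l, A y i l * (A y)⁻¹ l j)
      = fun _ => if i = j then (1:ℝ) else 0 := by
    intro i j; funext y
    have h := Matrix.mul_nonsing_inv (A y) (hAinv y)
    calc ∑ l, A y i l * (A y)⁻¹ l j = (A y * (A y)⁻¹) i j := (Matrix.mul_apply).symm
      _ = (1 : Matrix (Fin d) (Fin d) ℝ) i j := by rw [h]
      _ = if i = j then (1:ℝ) else 0 := Matrix.one_apply
  have hrel2 : ∀ i j, (fun y => ∑ l, (A y)⁻¹ i l * A y l j)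
      = fun _ => if i = j then (1:ℝ) else 0 := by
    intro i j; funext y
    have h := Matrix.nonsing_inv_mul (A y) (hAinv y)
    calc ∑ l, (A y)⁻¹ i l * A y l j = ((A y)⁻¹ * A y) i j := (Matrix.mul_apply).symm
      _ = (1 : Matrix (Fin d) (Fin d) ℝ) i j := by rw [h]
      _ = if i = j then (1:ℝ) else 0 := Matrix.one_apply
  have hPQ : P * Q = 1 := Matrix.mul_nonsing_inv (A x) (hAinv x)
  have hQP : Q * P = 1 := Matrix.nonsing_inv_mul (A x) (hAinv x)
  -- first-order differentiated relations
  have hDE : ∀ k, D k * Q + P * E k = 0 := by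
    intro k
    ext i j
    have h0 : pd k (fun y => ∑ l, A y i l * (A y)⁻¹ l j) x = 0 := by
      rw [hrel1 i j]; exact pd_const k _ x
    rw [pd_sum Finset.univ
      (fun l _ => ((hA i l).diffR x).fun_mul ((hb l j).diffR x)) k] at h0
    have h1 : ∀ l : Fin d, pd k (fun y => A y i l * (A y)⁻¹ l j) x
        = A x i l * pd k (fun y => (A y)⁻¹ l j) x
          + (A x)⁻¹ l j * pd k (fun y => A y i l) x :=
      fun l => pd_mul ((hA i l).diffR x) ((hb l j).diffR x) k
    rw [Finset.sum_congr rfl fun l _ => h1 l, Finset.sum_add_distrib] at h0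
    simp only [Matrix.add_apply, Matrix.mul_apply, Matrix.zero_apply, hDdef, hEdef,
      Matrix.of_apply]
    calc (∑ l, pd k (fun y => A y i l) x * Q l j) + ∑ l, P i l * pd k (fun y => (A y)⁻¹ l j) x
        = (∑ l, A x i l * pd k (fun y => (A y)⁻¹ l j) x)
          + ∑ l, (A x)⁻¹ l j * pd k (fun y => A y i l) x := by
          rw [add_comm]
          congr 1
          · exact Finset.sum_congr rfl fun l _ => mul_comm _ _
      _ = 0 := h0
  have hED : ∀ k, E k * P + Q * D k = 0 := by
    intro k
    ext i j
    have h0 : pd k (fun y => ∑ l, (A y)⁻¹ i l * A y l j) x = 0 := by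
      rw [hrel2 i j]; exact pd_const k _ x
    rw [pd_sum Finset.univ
      (fun l _ => ((hb i l).diffR x).fun_mul ((hA l j).diffR x)) k] at h0
    have h1 : ∀ l : Fin d, pd k (fun y => (A y)⁻¹ i l * A y l j) x
        = (A x)⁻¹ i l * pd k (fun y => A y l j) x
          + A x l j * pd k (fun y => (A y)⁻¹ i l) x :=
      fun l => pd_mul ((hb i l).diffR x) ((hA l j).diffR x) k
    rw [Finset.sum_congr rfl fun l _ => h1 l, Finset.sum_add_distrib] at h0
    simp only [Matrix.add_apply, Matrix.mul_apply, Matrix.zero_apply, hDdef, hEdef,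
      Matrix.of_apply]
    calc (∑ l, pd k (fun y => (A y)⁻¹ i l) x * P l j) + ∑ l, Q i l * pd k (fun y => A y l j) x
        = (∑ l, (A x)⁻¹ i l * pd k (fun y => A y l j) x)
          + ∑ l, A x l j * pd k (fun y => (A y)⁻¹ i l) x := by
          rw [add_comm]
          congr 1
          · exact Finset.sum_congr rfl fun l _ => mul_comm _ _
      _ = 0 := h0
  -- second-order (L-) differentiated relation
  have hLrel : P * Lb + La * Q + (2:ℝ) • ∑ k, D k * E k = 0 := by
    ext i j
    have h0 : Lop V (fun y => ∑ l, A y i l * (A y)⁻¹ l j) x = 0 := by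
      rw [hrel1 i j]; exact Lop_const V _ x
    rw [Lop_sum V Finset.univ (fun l _ => (hA i l).mul (hb l j)) x] at h0
    have h1 : ∀ l : Fin d, Lop V (fun y => A y i l * (A y)⁻¹ l j) x
        = A x i l * Lop V (fun y => (A y)⁻¹ l j) x
          + (A x)⁻¹ l j * Lop V (fun y => A y i l) x
          + 2 * ∑ k, pd k (fun y => A y i l) x * pd k (fun y => (A y)⁻¹ l j) x :=
      fun l => Lop_mul V (hA i l) (hb l j) x
    rw [Finset.sum_congr rfl fun l _ => h1 l, Finset.sum_add_distrib,
      Finset.sum_add_distrib] at h0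
    simp only [Matrix.add_apply, Matrix.smul_apply, Matrix.sum_apply, Matrix.mul_apply,
      Matrix.zero_apply, hDdef, hEdef, hLadef, hLbdef, matL, Matrix.of_apply, smul_eq_mul]
    calc (∑ l, P i l * Lop V (fun y => (A y)⁻¹ l j) x)
          + (∑ l, Lop V (fun y => A y i l) x * Q l j)
          + 2 * ∑ k, ∑ l, pd k (fun y => A y i l) x * pd k (fun y => (A y)⁻¹ l j) x
        = ((∑ l, A x i l * Lop V (fun y => (A y)⁻¹ l j) x)
            + ∑ l, (A x)⁻¹ l j * Lop V (fun y => A y i l) x)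
          + ∑ l, 2 * ∑ k, pd k (fun y => A y i l) x * pd k (fun y => (A y)⁻¹ l j) x := by
          rw [Finset.sum_comm (s := Finset.univ) (t := Finset.univ), ← Finset.mul_sum]
          congr 2
          exact Finset.sum_congr rfl fun l _ => mul_comm _ _
      _ = 0 := h0
  -- the vector field F = A ∇f, componentwise
  have hFcomp : ∀ l : Fin d, (fun y => (A y *ᵥ gradv f y) l)
      = fun y => ∑ m, A y l m * pd m f y := by
    intro l; funext y
    simp [Matrix.mulVec, dotProduct, gradv]
  -- gradient of Lf
  have hGradL : gradv (Lop V f) x = Lg - H *ᵥ gv := by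
    funext i
    have := pd_Lop hV hf i x
    simp only [gradv, Pi.sub_apply, Matrix.mulVec, dotProduct, hHdef, hessM, Matrix.of_apply,
      hLgdef, hgvdef] at this ⊢
    exact this
  -- vecL of F
  have hvecL : vecL V (fun y => A y *ᵥ gradv f y) x
      = P *ᵥ Lg + La *ᵥ gv + (2:ℝ) • ∑ k, D k *ᵥ hk k := by
    funext i
    have h1 : Lop V (fun y => (A y *ᵥ gradv f y) i) x
        = ∑ m, Lop V (fun y => A y i m * pd m f y) x := by
      rw [hFcomp i]
      exact Lop_sum V Finset.univ (fun m _ => (hA i m).mul (hg m)) x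
    have h2 : ∀ m : Fin d, Lop V (fun y => A y i m * pd m f y) x
        = A x i m * Lop V (pd m f) x + pd m f x * Lop V (fun y => A y i m) x
          + 2 * ∑ k, pd k (fun y => A y i m) x * pd k (pd m f) x :=
      fun m => Lop_mul V (hA i m) (hg m) x
    show Lop V (fun y => (A y *ᵥ gradv f y) i) x = _
    rw [h1, Finset.sum_congr rfl fun m _ => h2 m, Finset.sum_add_distrib,
      Finset.sum_add_distrib]
    simp only [Pi.add_apply, Pi.smul_apply, Matrix.mulVec, dotProduct, Finset.sum_apply,
      smul_eq_mul, hDdef, Matrix.of_apply, hLadef, hLgdef, hgvdef, hhkdef, gradv]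
    congr 1
    · congr 1
      exact Finset.sum_congr rfl fun m _ => mul_comm _ _
    · rw [Finset.sum_comm (s := Finset.univ) (t := Finset.univ), ← Finset.mul_sum]
  -- derivatives of components of F
  have hpdF : ∀ k l, pd k (fun y => (A y *ᵥ gradv f y) l) x
      = (D k *ᵥ gv) l + (P *ᵥ hk k) l := by
    intro k l
    rw [hFcomp l, pd_sum Finset.univ
      (fun m _ => ((hA l m).diffR x).fun_mul ((hg m).diffR x)) k]
    have h1 : ∀ m : Fin d, pd k (fun y => A y l m * pd m f y) x
        = A x l m * pd k (pd m f) x + pd m f x * pd k (fun y => A y l m) x :=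
      fun m => pd_mul ((hA l m).diffR x) ((hg m).diffR x) k
    rw [Finset.sum_congr rfl fun m _ => h1 m, Finset.sum_add_distrib]
    simp only [Matrix.mulVec, dotProduct, hDdef, Matrix.of_apply, hgvdef, hhkdef, gradv]
    rw [add_comm]
    congr 1
    exact Finset.sum_congr rfl fun m _ => mul_comm _ _
  -- gAinvG of F
  have hgA : gAinvG A (fun y => A y *ᵥ gradv f y) x
      = ∑ k, E k *ᵥ (D k *ᵥ gv + P *ᵥ hk k) := by
    funext j
    show (∑ l, ∑ k, pd k (fun y => (A y)⁻¹ j l) x * pd k (fun y => (A y *ᵥ gradv f y) l) x) = _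
    rw [Finset.sum_comm, Finset.sum_apply]
    refine Finset.sum_congr rfl fun k _ => ?_
    have hterm : ∀ l : Fin d,
        pd k (fun y => (A y)⁻¹ j l) x * pd k (fun y => (A y *ᵥ gradv f y) l) x
          = pd k (fun y => (A y)⁻¹ j l) x * ((D k *ᵥ gv) l + (P *ᵥ hk k) l) :=
      fun l => by rw [hpdF k l]
    rw [Finset.sum_congr rfl fun l _ => hterm l]
    simp [Matrix.mulVec, dotProduct, hEdef]
  -- matrix consequences of the relations
  have e1 : ∀ k, P * E k = -(D k * Q) := by
    intro k
    have h := hDE k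
    rw [add_comm] at h
    exact eq_neg_of_add_eq_zero_left h
  have e2 : ∀ k, E k * P = -(Q * D k) := fun k => eq_neg_of_add_eq_zero_left (hED k)
  have e3 : P * Lb = -(La * Q) - (2:ℝ) • ∑ k, D k * E k := by
    have h := hLrel
    rw [add_assoc] at h
    have h2 := eq_neg_of_add_eq_zero_left h
    rw [h2, neg_add, sub_eq_add_neg]
  have e4 : P * Lb * P = -La + (2:ℝ) • ∑ k, D k * Q * D k := by
    rw [e3, sub_mul, neg_mul, mul_assoc, hQP, mul_one, smul_mul_assoc, Finset.sum_mul]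
    have : ∀ k : Fin d, D k * E k * P = -(D k * Q * D k) := by
      intro k
      rw [mul_assoc, e2 k, mul_neg, ← mul_assoc]
    rw [Finset.sum_congr rfl fun k _ => this k, Finset.sum_neg_distrib, smul_neg]
    abel
  -- assemble
  rw [hGradL, LA, hvecL, hgA, MA]
  have hAgv : A x *ᵥ gradv f x = P *ᵥ gv := rfl
  rw [hAgv]
  have hPsum : P *ᵥ (∑ k, E k *ᵥ (D k *ᵥ gv + P *ᵥ hk k))
      = ∑ k, (-((D k * Q * D k) *ᵥ gv) + -(D k *ᵥ hk k)) := by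
    rw [mulVec_sumFin]
    refine Finset.sum_congr rfl fun k _ => ?_
    rw [Matrix.mulVec_mulVec, e1 k, Matrix.neg_mulVec, Matrix.mulVec_add, neg_add]
    congr 1
    · rw [Matrix.mulVec_mulVec]
    · rw [Matrix.mulVec_mulVec, mul_assoc, hQP, mul_one]
  rw [hPsum]
  have hMA1 : (P * hessM V x * Q - P * matL V (fun y => (A y)⁻¹) x) *ᵥ (P *ᵥ gv)
      = (P * H) *ᵥ gv - (-La + (2:ℝ) • ∑ k, D k * Q * D k) *ᵥ gv := by
    rw [Matrix.sub_mulVec, Matrix.mulVec_mulVec, Matrix.mulVec_mulVec]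
    rw [show P * hessM V x * Q * P = P * H by rw [mul_assoc, hQP, mul_one, hHdef]]
    rw [show P * matL V (fun y => (A y)⁻¹) x * P = P * Lb * P by rw [hLbdef]]
    rw [e4]
  rw [hMA1]
  rw [Matrix.mulVec_sub, Matrix.mulVec_mulVec]
  rw [Finset.sum_add_distrib, Finset.sum_neg_distrib, Finset.sum_neg_distrib,
    Matrix.add_mulVec, Matrix.neg_mulVec, smul_mulVec, sumFin_mulVec]
  simp only [smul_add, smul_neg, two_smul]
  abel
end
end

section
/- (Improved Gaussian second-order Poincaré inequality.) Let γ be the standard Gaussian probability measure on ℝ^d (density proportional to e^{−|x|²/2}) and L f = Δf − x·∇f the Ornstein–Uhlenbeck operator. Let f be smooth, compactly supported, with ∫ f dγ = 0, and let g be smooth with ∫ g dγ = 0, L g = f and ∫ |∇g|² dγ < ∞. Set c := ∫ ∇g dγ and assume: (i) ∫ |∇g − c|² dγ ≤ − ∫ (∇g − c)·𝕃(∇g − c) dγ (with the right-hand side well-defined), and (ii) ∫ c'·𝕃(∇g − c) dγ = 0 for every constant vector c' ∈ ℝ^d. Then Var_γ(f) ≤ (1/2) ∫ |∇f|² dγ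 + (1/2) |∫ ∇f dγ|² − (1/2) ∫ |(𝕃 + I)(∇g − c)|² dγ. -/
open Real MeasureTheory Matrix
open scoped NNReal ENNReal

noncomputable section

namespace S13
variable {d : ℕ}

lemma top_le : ((⊤:ℕ∞) : WithTop ℕ∞) + 1 ≤ ((⊤:ℕ∞) : WithTop ℕ∞) := by norm_cast

lemma two_le : (2 : WithTop ℕ∞) ≤ ((⊤:ℕ∞) : WithTop ℕ∞) := by
  rw [show ((2:WithTop ℕ∞)) = ((2:ℕ∞) : WithTop ℕ∞) from rfl]
  exact_mod_cast (le_top : (2:ℕ∞) ≤ ⊤)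

lemma contDiff_pd {h : Euc d → ℝ} (hh : ContDiff ℝ (⊤ : ℕ∞) h) (i : Fin d) :
    ContDiff ℝ (⊤ : ℕ∞) (pd i h) :=
  (ContinuousLinearMap.apply ℝ ℝ ((Pi.single i 1 : Euc d))).contDiff.comp
    (hh.fderiv_right top_le)

lemma diff_pd {h : Euc d → ℝ} (hh : ContDiff ℝ (⊤ : ℕ∞) h) (i : Fin d) (x : Euc d) :
    DifferentiableAt ℝ (pd i h) x :=
  ((contDiff_pd hh i).differentiable (by norm_cast)).differentiableAt

lemma cont_pd {h : Euc d → ℝ} (hh : ContDiff ℝ (⊤ : ℕ∞) h) (i : Fin d) :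
    Continuous (pd i h) := (contDiff_pd hh i).continuous

lemma diff_of_contDiff {h : Euc d → ℝ} (hh : ContDiff ℝ (⊤ : ℕ∞) h) (x : Euc d) :
    DifferentiableAt ℝ h x :=
  (hh.differentiable (by norm_cast)).differentiableAt

lemma pd_add {a b : Euc d → ℝ} {x : Euc d} (ha : DifferentiableAt ℝ a x)
    (hb : DifferentiableAt ℝ b x) (i : Fin d) :
    pd i (fun y => a y + b y) x = pd i a x + pd i b x := by
  simp [pd, fderiv_fun_add ha hb]

lemma pd_sub {a b : Euc d → ℝ} {x : Euc d} (ha : DifferentiableAt ℝ a x)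
    (hb : DifferentiableAt ℝ b x) (i : Fin d) :
    pd i (fun y => a y - b y) x = pd i a x - pd i b x := by
  simp [pd, fderiv_fun_sub ha hb]

lemma pd_sub_const {a : Euc d → ℝ} {x : Euc d} (k : ℝ) (i : Fin d) :
    pd i (fun y => a y - k) x = pd i a x := by
  simp [pd, fderiv_sub_const]

lemma pd_const {x : Euc d} (k : ℝ) (i : Fin d) : pd i (fun _ => k) x = 0 := by
  simp [pd]

lemma pd_mul {a b : Euc d → ℝ} {x : Euc d} (ha : DifferentiableAt ℝ a x)
    (hb : DifferentiableAt ℝ b x) (i : Fin d) :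
    pd i (fun y => a y * b y) x = pd i a x * b x + a x * pd i b x := by
  simp [pd, fderiv_fun_mul ha hb]; ring

lemma pd_sum {ι : Type*} (s : Finset ι) {F : ι → Euc d → ℝ} {x : Euc d}
    (hF : ∀ j ∈ s, DifferentiableAt ℝ (F j) x) (i : Fin d) :
    pd i (fun y => ∑ j ∈ s, F j y) x = ∑ j ∈ s, pd i (F j) x := by
  simp [pd, fderiv_fun_sum hF]

lemma pd_coord (i j : Fin d) (x : Euc d) :
    pd i (fun y : Euc d => y j) x = (Pi.single i 1 : Euc d) j := by
  have : (fun y : Euc d => y j) = fun y => (ContinuousLinearMap.proj j : Euc d →L[ℝ] ℝ) y := rfl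
  rw [pd, this, ContinuousLinearMap.fderiv]
  rfl

lemma diff_coord (j : Fin d) (x : Euc d) : DifferentiableAt ℝ (fun y : Euc d => y j) x :=
  (ContinuousLinearMap.proj j : Euc d →L[ℝ] ℝ).differentiableAt

lemma pd_exp {a : Euc d → ℝ} {x : Euc d} (ha : DifferentiableAt ℝ a x) (i : Fin d) :
    pd i (fun y => Real.exp (a y)) x = Real.exp (a x) * pd i a x := by
  simp [pd, fderiv_exp ha]

lemma pd_neg {a : Euc d → ℝ} {x : Euc d} (i : Fin d) :
    pd i (fun y => -(a y)) x = -(pd i a x) := by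
  simp [pd, fderiv_neg]

lemma pd_div_const {a : Euc d → ℝ} {x : Euc d} (ha : DifferentiableAt ℝ a x) (k : ℝ)
    (i : Fin d) : pd i (fun y => a y / k) x = pd i a x / k := by
  simp only [div_eq_mul_inv, pd, fderiv_mul_const ha]
  simp [mul_comm]


lemma pd_pd_eq (h : Euc d → ℝ) (hh : ContDiff ℝ (⊤ : ℕ∞) h) (i j : Fin d) (x : Euc d) :
    pd i (pd j h) x = fderiv ℝ (fderiv ℝ h) x (Pi.single i 1) (Pi.single j 1) := by
  have hD : DifferentiableAt ℝ (fderiv ℝ h) x :=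
    ((hh.fderiv_right top_le).differentiable (by norm_cast)).differentiableAt
  have hA : HasFDerivAt
      (fun y => (ContinuousLinearMap.apply ℝ ℝ (Pi.single j 1 : Euc d)) (fderiv ℝ h y))
      ((ContinuousLinearMap.apply ℝ ℝ (Pi.single j 1 : Euc d)).comp
        (fderiv ℝ (fderiv ℝ h) x)) x :=
    (ContinuousLinearMap.apply ℝ ℝ (Pi.single j 1 : Euc d)).hasFDerivAt.comp x hD.hasFDerivAt
  have : pd j h = fun y => (ContinuousLinearMap.apply ℝ ℝ (Pi.single j 1 : Euc d))
      (fderiv ℝ h y) := rfl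
  rw [pd, this, hA.fderiv]
  rfl

lemma pd_swap (h : Euc d → ℝ) (hh : ContDiff ℝ (⊤ : ℕ∞) h) (i j : Fin d) (x : Euc d) :
    pd i (pd j h) x = pd j (pd i h) x := by
  rw [pd_pd_eq h hh i j x, pd_pd_eq h hh j i x]
  exact (hh.contDiffAt.isSymmSndFDerivAt (by rw [minSmoothness_of_isRCLikeNormedField]; exact two_le)).eq _ _

lemma integral_pd_eq_zero (φ : Euc d → ℝ) (hφ : ContDiff ℝ (⊤ : ℕ∞) φ)
    (hc : HasCompactSupport φ) (i : Fin d) :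
    ∫ x : Euc d, pd i φ x = 0 := by
  obtain ⟨C, hC⟩ := ContDiff.lipschitzWith_of_hasCompactSupport hc hφ (by norm_cast)
  have h1 : LipschitzWith 0 (fun _ : Euc d => (1:ℝ)) := LipschitzWith.const' 1
  have key := LipschitzWith.integral_lineDeriv_mul_eq (μ := (volume : Measure (Euc d))) h1 hC hc
    (-(Pi.single i 1 : Euc d))
  have hconst : ∀ x : Euc d, lineDeriv ℝ (fun _ : Euc d => (1:ℝ)) x (-(Pi.single i 1 : Euc d)) = 0 := by
    intro x
    rw [(differentiableAt_const (1:ℝ)).lineDeriv_eq_fderiv]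
    simp
  simp only [hconst, zero_mul, integral_zero, neg_neg, mul_one] at key
  have h2 : (fun x : Euc d => lineDeriv ℝ φ x (Pi.single i 1)) = fun x => pd i φ x := by
    funext x
    exact (diff_of_contDiff hφ x).lineDeriv_eq_fderiv
  rw [h2] at key
  exact key.symm

lemma contDiff_Vformula : ContDiff ℝ (⊤ : ℕ∞) (fun x : Euc d => (∑ i, x i ^ 2) / 2) := by
  apply ContDiff.div_const
  exact ContDiff.sum (fun j _ => ((ContinuousLinearMap.proj j : Euc d →L[ℝ] ℝ).contDiff).pow 2)

lemma pd_V {V : Euc d → ℝ} (hV : ∀ x, V x = (∑ i, x i ^ 2) / 2) (i : Fin d) (x : Euc d) :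
    pd i V x = x i := by
  have hVf : V = fun x : Euc d => (∑ j, x j ^ 2) / 2 := funext hV
  subst hVf
  have hdiffsum : DifferentiableAt ℝ (fun y : Euc d => ∑ j, y j ^ 2) x := by
    apply DifferentiableAt.fun_sum
    intro j _
    exact (diff_coord j x).pow 2
  rw [pd_div_const hdiffsum]
  rw [pd_sum Finset.univ (F := fun j (y : Euc d) => y j ^ 2) (fun j _ => (diff_coord j x).pow 2)]
  have hterm : ∀ j : Fin d, pd i (fun y : Euc d => y j ^ 2) x
      = x j * (Pi.single i 1 : Euc d) j + (Pi.single i 1 : Euc d) j * x j := by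
    intro j
    have hy : (fun y : Euc d => y j ^ 2) = fun y : Euc d => y j * y j := by
      funext y; ring
    rw [hy, pd_mul (diff_coord j x) (diff_coord j x), pd_coord]
    ring
  simp only [hterm]
  simp [Pi.single_apply, mul_ite, ite_mul, mul_zero, zero_mul, Finset.sum_ite_eq',
    Finset.sum_add_distrib]

lemma gradv_V {V : Euc d → ℝ} (hV : ∀ x, V x = (∑ i, x i ^ 2) / 2) (x : Euc d) :
    gradv V x = x := by
  funext i
  exact pd_V hV i x

lemma Lop_eq {V : Euc d → ℝ} (hV : ∀ x, V x = (∑ i, x i ^ 2) / 2) (h : Euc d → ℝ)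
    (x : Euc d) :
    Lop V h x = (∑ j, pd j (pd j h) x) - ∑ j, x j * pd j h x := by
  unfold Lop
  rw [gradv_V hV]
  congr 1

/-- The commutation identity `𝕃(∇g - c) = ∇f + ∇g` for the OU generator. -/
lemma key_identity {V g f : Euc d → ℝ} (hV : ∀ x, V x = (∑ i, x i ^ 2) / 2)
    (hg : ContDiff ℝ (⊤ : ℕ∞) g) (hpois : ∀ x, Lop V g x = f x) (c : Euc d)
    (i : Fin d) (x : Euc d) :
    vecL V (fun y => gradv g y - c) x i = pd i f x + pd i g x := by
  have hL : vecL V (fun y => gradv g y - c) x i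
      = (∑ j, pd j (pd j (pd i g)) x) - ∑ j, x j * pd j (pd i g) x := by
    have h1 : (fun y => (gradv g y - c) i) = fun y => pd i g y - c i := rfl
    show Lop V (fun y => (gradv g y - c) i) x = _
    rw [h1, Lop_eq hV]
    have h2 : ∀ j : Fin d, pd j (fun y => pd i g y - c i) = pd j (pd i g) := by
      intro j; funext y
      exact pd_sub_const (c i) j
    simp only [h2]
  have hf_eq : f = fun y => (∑ j, pd j (pd j g) y) - ∑ j, y j * pd j g y := by
    funext y
    rw [← hpois y, Lop_eq hV]
  have hdiff1 : ∀ (j : Fin d) (y : Euc d), DifferentiableAt ℝ (pd j (pd j g)) y := fun j y =>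
    diff_pd (contDiff_pd hg j) j y
  have hdiff2 : ∀ (j : Fin d) (y : Euc d),
      DifferentiableAt ℝ (fun z : Euc d => z j * pd j g z) y := fun j y =>
    (diff_coord j y).mul (diff_pd hg j y)
  have hR : pd i f x = (∑ j, pd i (pd j (pd j g)) x)
      - ∑ j, ((Pi.single i 1 : Euc d) j * pd j g x + x j * pd i (pd j g) x) := by
    rw [hf_eq]
    rw [pd_sub (DifferentiableAt.fun_sum (fun j _ => hdiff1 j x))
        (DifferentiableAt.fun_sum (fun j _ => hdiff2 j x))]
    rw [pd_sum Finset.univ (fun j _ => hdiff1 j x), pd_sum Finset.univ (fun j _ => hdiff2 j x)]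
    congr 1
    apply Finset.sum_congr rfl
    intro j _
    rw [pd_mul (diff_coord j x) (diff_pd hg j x), pd_coord]
  have hswap1 : ∀ j : Fin d, pd i (pd j g) = pd j (pd i g) := by
    intro j; funext y; exact pd_swap g hg i j y
  have hswap2 : ∀ j : Fin d, pd i (pd j (pd j g)) x = pd j (pd j (pd i g)) x := by
    intro j
    rw [pd_swap (pd j g) (contDiff_pd hg j) i j x]
    congr 1
    rw [hswap1 j]
  rw [hL, hR]
  simp only [hswap2]
  have hsingle : ∑ j, ((Pi.single i 1 : Euc d) j * pd j g x + x j * pd i (pd j g) x)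
      = pd i g x + ∑ j, x j * pd j (pd i g) x := by
    rw [Finset.sum_add_distrib]
    congr 1
    · simp [Pi.single_apply, ite_mul, zero_mul, Finset.sum_ite_eq']
    · apply Finset.sum_congr rfl
      intro j _
      rw [hswap1 j]
  rw [hsingle]
  ring


lemma expV_integrable {V : Euc d → ℝ} (hV : ∀ x, V x = (∑ i, x i ^ 2) / 2) :
    Integrable (fun x : Euc d => Real.exp (-V x)) volume := by
  have h1 : (fun x : Euc d => Real.exp (-V x))
      = fun x : Euc d => ∏ i, Real.exp (-((1:ℝ)/2) * x i ^ 2) := by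
    funext x
    rw [hV x, ← Real.exp_sum]
    congr 1
    rw [show (∑ i, -((1:ℝ)/2) * x i ^ 2) = ∑ i, -(x i ^ 2 / 2) from
      Finset.sum_congr rfl fun i _ => by ring]
    rw [Finset.sum_neg_distrib, Finset.sum_div]
  rw [h1]
  apply Integrable.fintype_prod (f := fun (_ : Fin d) (t : ℝ) => Real.exp (-((1:ℝ)/2) * t ^ 2))
  intro i
  exact integrable_exp_neg_mul_sq (by norm_num)

lemma Z_pos {V : Euc d → ℝ} (hV : ∀ x, V x = (∑ i, x i ^ 2) / 2) :
    0 < ∫ x : Euc d, Real.exp (-V x) := by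
  apply (integral_pos_iff_support_of_nonneg_ae _ (expV_integrable hV)).2
  · have : (Function.support fun x : Euc d => Real.exp (-V x)) = Set.univ := by
      ext x; simp [Real.exp_ne_zero]
    rw [this]
    exact isOpen_univ.measure_pos volume Set.univ_nonempty
  · exact Filter.Eventually.of_forall fun x => (Real.exp_pos _).le

lemma integral_gibbs {V : Euc d → ℝ} (hVc : Continuous V) (h : Euc d → ℝ) :
    ∫ x, h x ∂(gibbs V)
      = (∫ x : Euc d, Real.exp (-V x))⁻¹ * ∫ x : Euc d, h x * Real.exp (-V x) := by
  unfold gibbs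
  rw [integral_smul_measure]
  have hd : (fun x : Euc d => ENNReal.ofReal (Real.exp (-V x)))
      = fun x : Euc d => ((Real.toNNReal (Real.exp (-V x)) : ℝ≥0) : ℝ≥0∞) := rfl
  rw [hd, integral_withDensity_eq_integral_smul
    (f := fun x : Euc d => Real.toNNReal (Real.exp (-V x)))
    (Continuous.measurable (continuous_real_toNNReal.comp (hVc.neg.rexp))) h]
  rw [ENNReal.toReal_inv, ENNReal.toReal_ofReal (integral_nonneg fun x => (Real.exp_pos _).le)]
  rw [smul_eq_mul]
  congr 1
  apply integral_congr_ae
  apply Filter.Eventually.of_forall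
  intro x
  simp [NNReal.smul_def, Real.coe_toNNReal _ (Real.exp_pos (-V x)).le, mul_comm]

lemma gibbs_isProb {V : Euc d → ℝ} (hV : ∀ x, V x = (∑ i, x i ^ 2) / 2) :
    IsProbabilityMeasure (gibbs V) := by
  constructor
  unfold gibbs
  rw [Measure.smul_apply, MeasureTheory.withDensity_apply _ MeasurableSet.univ,
    Measure.restrict_univ]
  rw [← MeasureTheory.ofReal_integral_eq_lintegral_ofReal (expV_integrable hV)
    (Filter.Eventually.of_forall fun x => (Real.exp_pos _).le)]
  rw [smul_eq_mul]
  exact ENNReal.inv_mul_cancel (ENNReal.ofReal_pos.mpr (Z_pos hV)).ne' ENNReal.ofReal_ne_top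


lemma hasCompactSupport_pd {φ : Euc d → ℝ} (h : HasCompactSupport φ) (j : Fin d) :
    HasCompactSupport (pd j φ) :=
  (h.fderiv ℝ).comp_left (g := fun L : Euc d →L[ℝ] ℝ => L (Pi.single j 1)) rfl

lemma contDiff_V {V : Euc d → ℝ} (hV : ∀ x, V x = (∑ i, x i ^ 2) / 2) :
    ContDiff ℝ (⊤ : ℕ∞) V := by
  have : V = fun x : Euc d => (∑ i, x i ^ 2) / 2 := funext hV
  rw [this]
  exact contDiff_Vformula

/-- Integration by parts : `∫ f² dγ = -∫ ∇f ⬝ ∇g dγ` when `Lg = f`. -/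
lemma ibp {V f g : Euc d → ℝ} (hV : ∀ x, V x = (∑ i, x i ^ 2) / 2)
    (hf : ContDiff ℝ (⊤ : ℕ∞) f) (hfc : HasCompactSupport f)
    (hg : ContDiff ℝ (⊤ : ℕ∞) g) (hpois : ∀ x, Lop V g x = f x) :
    ∫ x, f x ^ 2 ∂(gibbs V)
      = - ∫ x, (∑ j, pd j f x * pd j g x) ∂(gibbs V) := by
  have hVsm : ContDiff ℝ (⊤ : ℕ∞) V := contDiff_V hV
  have hE : ContDiff ℝ (⊤ : ℕ∞) (fun x : Euc d => Real.exp (-V x)) := hVsm.neg.exp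
  set φ : Fin d → Euc d → ℝ := fun j x => f x * pd j g x * Real.exp (-V x) with hφ
  have hφsm : ∀ j, ContDiff ℝ (⊤ : ℕ∞) (φ j) := fun j =>
    (hf.mul (contDiff_pd hg j)).mul hE
  have hφc : ∀ j, HasCompactSupport (φ j) := fun j => (hfc.mul_right).mul_right
  have h0 : ∀ j, ∫ x : Euc d, pd j (φ j) x = 0 := fun j =>
    integral_pd_eq_zero (φ j) (hφsm j) (hφc j) j
  -- pointwise computation of pd j (φ j)
  have hEpd : ∀ (j : Fin d) (x : Euc d),
      pd j (fun y : Euc d => Real.exp (-V y)) x = Real.exp (-V x) * (-(x j)) := by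
    intro j x
    rw [show (fun y : Euc d => Real.exp (-V y)) = fun y : Euc d => Real.exp ((fun z => -V z) y)
      from rfl]
    rw [pd_exp (diff_of_contDiff hVsm.neg x) j]
    rw [pd_neg, pd_V hV]
  have hpdφ : ∀ (j : Fin d) (x : Euc d), pd j (φ j) x
      = (pd j f x * pd j g x + f x * pd j (pd j g) x - f x * pd j g x * x j)
          * Real.exp (-V x) := by
    intro j x
    have hbeta : φ j = fun x => f x * pd j g x * Real.exp (-V x) := rfl
    rw [hbeta]
    have d1 : DifferentiableAt ℝ (fun y : Euc d => f y * pd j g y) x :=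
      (diff_of_contDiff hf x).mul (diff_pd hg j x)
    have d2 : DifferentiableAt ℝ (fun y : Euc d => Real.exp (-V y)) x :=
      diff_of_contDiff hE x
    rw [pd_mul d1 d2, pd_mul (diff_of_contDiff hf x) (diff_pd hg j x), hEpd j x]
    ring
  -- sum over j
  have hsum : ∀ x : Euc d, (∑ j, pd j (φ j) x)
      = ((∑ j, pd j f x * pd j g x) + f x ^ 2) * Real.exp (-V x) := by
    intro x
    simp only [hpdφ]
    rw [← Finset.sum_mul]
    congr 1
    have : ∀ j : Fin d,
        pd j f x * pd j g x + f x * pd j (pd j g) x - f x * pd j g x * x j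
        = pd j f x * pd j g x + (f x * pd j (pd j g) x - f x * (x j * pd j g x)) := by
      intro j; ring
    simp only [this]
    rw [Finset.sum_add_distrib, Finset.sum_sub_distrib, ← Finset.mul_sum, ← Finset.mul_sum,
      ← mul_sub, ← Lop_eq hV g x, hpois x]
    ring
  -- integrate over volume
  have hint : ∀ j, Integrable (pd j (φ j)) volume := fun j =>
    ((contDiff_pd (hφsm j) j).continuous).integrable_of_hasCompactSupport
      (hasCompactSupport_pd (hφc j) j)
  have h1 : ∫ x : Euc d, (∑ j, pd j (φ j) x) = 0 := by
    rw [integral_finset_sum Finset.univ (fun j _ => hint j)]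
    simp [h0]
  rw [funext hsum] at h1
  -- split the two parts
  have hintA : Integrable (fun x : Euc d => (∑ j, pd j f x * pd j g x) * Real.exp (-V x))
      volume := by
    apply Continuous.integrable_of_hasCompactSupport
    · exact ((continuous_finset_sum _ (fun j _ =>
        (cont_pd hf j).mul (cont_pd hg j))).mul hE.continuous)
    · apply HasCompactSupport.mul_right
      apply HasCompactSupport.intro hfc
      intro x hx
      have hz : ∀ j : Fin d, pd j f x = 0 := by
        intro j
        have : fderiv ℝ f x = 0 := by
          by_contra hne
          exact hx (support_fderiv_subset ℝ (by simpa [Function.mem_support] using hne))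
        simp [pd, this]
      simp [hz]
  have hintB : Integrable (fun x : Euc d => f x ^ 2 * Real.exp (-V x)) volume := by
    apply Continuous.integrable_of_hasCompactSupport
    · exact ((hf.continuous.pow 2).mul hE.continuous)
    · apply HasCompactSupport.mul_right
      apply HasCompactSupport.intro hfc
      intro x hx
      have : f x = 0 := image_eq_zero_of_notMem_tsupport hx
      simp [this]
  have h2 : (fun x : Euc d => ((∑ j, pd j f x * pd j g x) + f x ^ 2) * Real.exp (-V x))
      = fun x : Euc d => (∑ j, pd j f x * pd j g x) * Real.exp (-V x)
          + f x ^ 2 * Real.exp (-V x) := by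
    funext x; ring
  rw [h2] at h1
  rw [integral_add hintA hintB] at h1
  have hVc : Continuous V := hVsm.continuous
  rw [integral_gibbs hVc (fun x => f x ^ 2), integral_gibbs hVc
    (fun x => ∑ j, pd j f x * pd j g x)]
  have h3 : ∫ x : Euc d, f x ^ 2 * Real.exp (-V x)
      = - ∫ x : Euc d, (∑ j, pd j f x * pd j g x) * Real.exp (-V x) := by linarith
  rw [h3]
  ring


lemma integral_comb6 {μ : Measure (Euc d)} [IsProbabilityMeasure μ]
    {u1 u2 u3 u4 u5 : Euc d → ℝ} (h1 : Integrable u1 μ) (h2 : Integrable u2 μ)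
    (h3 : Integrable u3 μ) (h4 : Integrable u4 μ) (h5 : Integrable u5 μ) (k : ℝ) :
    ∫ x, (u1 x + u2 x + u3 x + u4 x + u5 x + k) ∂μ
      = (∫ x, u1 x ∂μ) + (∫ x, u2 x ∂μ) + (∫ x, u3 x ∂μ) + (∫ x, u4 x ∂μ)
        + (∫ x, u5 x ∂μ) + k := by
  have H2 : Integrable (fun x => u1 x + u2 x) μ := h1.add h2
  have H3 : Integrable (fun x => u1 x + u2 x + u3 x) μ := H2.add h3
  have H4 : Integrable (fun x => u1 x + u2 x + u3 x + u4 x) μ := H3.add h4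
  have H5 : Integrable (fun x => u1 x + u2 x + u3 x + u4 x + u5 x) μ := H4.add h5
  rw [integral_add H5 (integrable_const k), integral_add H4 h5, integral_add H3 h4,
      integral_add H2 h3, integral_add h1 h2, integral_const]
  simp

lemma integral_comb3 {μ : Measure (Euc d)} {u1 u2 u3 : Euc d → ℝ}
    (h1 : Integrable u1 μ) (h2 : Integrable u2 μ) (h3 : Integrable u3 μ) :
    ∫ x, (u1 x + (u2 x + u3 x)) ∂μ
      = (∫ x, u1 x ∂μ) + ((∫ x, u2 x ∂μ) + (∫ x, u3 x ∂μ)) := by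
  have H23 : Integrable (fun x => u2 x + u3 x) μ := h2.add h3
  rw [integral_add h1 H23, integral_add h2 h3]

end S13

/-- improved Gaussian second-order Poincaré inequality. -/
theorem stmt_13 {d : ℕ} (hd : 1 ≤ d)
    (V : Euc d → ℝ) (hVdef : ∀ x, V x = (∑ i, x i ^ 2) / 2)
    (f : Euc d → ℝ) (hf : ContDiff ℝ (⊤ : ℕ∞) f) (hfc : HasCompactSupport f)
    (hf0 : (∫ x, f x ∂(gibbs V)) = 0)
    (g : Euc d → ℝ) (hg : ContDiff ℝ (⊤ : ℕ∞) g) (hg0 : (∫ x, g x ∂(gibbs V)) = 0)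
    (hpois : ∀ x, Lop V g x = f x)
    (hgrad : Integrable (fun x => gradv g x ⬝ᵥ gradv g x) (gibbs V))
    (c : Euc d) (hc : ∀ i, c i = ∫ x, pd i g x ∂(gibbs V))
    (hPoincInt : Integrable
      (fun x => (gradv g x - c) ⬝ᵥ vecL V (fun y => gradv g y - c) x) (gibbs V))
    (hPoinc : (∫ x, (gradv g x - c) ⬝ᵥ (gradv g x - c) ∂(gibbs V))
      ≤ - ∫ x, (gradv g x - c) ⬝ᵥ vecL V (fun y => gradv g y - c) x ∂(gibbs V))
    (hOrth : ∀ c' : Euc d,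
      (∫ x, c' ⬝ᵥ vecL V (fun y => gradv g y - c) x ∂(gibbs V)) = 0) :
    Var' (gibbs V) f
      ≤ (1 / 2) * (∫ x, gradv f x ⬝ᵥ gradv f x ∂(gibbs V))
        + (1 / 2) * (∑ i, (∫ x, pd i f x ∂(gibbs V)) ^ 2)
        - (1 / 2) * ∫ x, (vecL V (fun y => gradv g y - c) x + (gradv g x - c)) ⬝ᵥ
            (vecL V (fun y => gradv g y - c) x + (gradv g x - c)) ∂(gibbs V) := by
  haveI hprob : IsProbabilityMeasure (gibbs V) := S13.gibbs_isProb hVdef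
  set μ := gibbs V with hμ
  -- integrability facts
  have int_cpt : ∀ {h : Euc d → ℝ}, Continuous h → HasCompactSupport h → Integrable h μ :=
    fun hcont hs => hcont.integrable_of_hasCompactSupport hs
  have cont_fi : ∀ i, Continuous (pd i f) := fun i => S13.cont_pd hf i
  have cpt_fi : ∀ i, HasCompactSupport (pd i f) := fun i => S13.hasCompactSupport_pd hfc i
  have cont_Gi : ∀ i, Continuous (pd i g) := fun i => S13.cont_pd hg i
  have int_fi : ∀ i, Integrable (pd i f) μ := fun i => int_cpt (cont_fi i) (cpt_fi i)
  have int_fifi : ∀ i, Integrable (fun x => pd i f x * pd i f x) μ := fun i =>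
    int_cpt ((cont_fi i).mul (cont_fi i)) ((cpt_fi i).mul_right)
  have int_fiGi : ∀ i, Integrable (fun x => pd i f x * pd i g x) μ := fun i =>
    int_cpt ((cont_fi i).mul (cont_Gi i)) ((cpt_fi i).mul_right)
  have hgrad' : Integrable (fun x => ∑ j, pd j g x * pd j g x) μ := by
    have hrw : (fun x : Euc d => gradv g x ⬝ᵥ gradv g x)
        = fun x => ∑ j, pd j g x * pd j g x := rfl
    rwa [hrw] at hgrad
  have int_GiGi : ∀ i, Integrable (fun x => pd i g x * pd i g x) μ := by
    intro i
    apply hgrad'.mono (((cont_Gi i).mul (cont_Gi i)).aestronglyMeasurable)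
    apply Filter.Eventually.of_forall
    intro x
    have h1 : ∀ j, 0 ≤ pd j g x * pd j g x := fun j => mul_self_nonneg _
    rw [Real.norm_eq_abs, Real.norm_eq_abs, Pi.mul_apply, abs_of_nonneg (h1 i),
      abs_of_nonneg (Finset.sum_nonneg fun j _ => h1 j)]
    exact Finset.single_le_sum (fun j _ => h1 j) (Finset.mem_univ i)
  have int_Gi : ∀ i, Integrable (pd i g) μ := by
    intro i
    apply Integrable.mono ((integrable_const (1:ℝ)).add (int_GiGi i))
      ((cont_Gi i).aestronglyMeasurable)
    apply Filter.Eventually.of_forall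
    intro x
    rw [Real.norm_eq_abs, Real.norm_eq_abs]
    have h2 : |pd i g x| ≤ 1 + pd i g x * pd i g x := by
      nlinarith [abs_nonneg (pd i g x), abs_mul_abs_self (pd i g x)]
    exact h2.trans (le_abs_self _)
  have int_Fi : ∀ i, Integrable (fun x => pd i g x - c i) μ := fun i =>
    (int_Gi i).sub (integrable_const _)
  have int_FiFi : ∀ i, Integrable (fun x => (pd i g x - c i) * (pd i g x - c i)) μ := by
    intro i
    have hrw : (fun x => (pd i g x - c i) * (pd i g x - c i))
        = fun x => pd i g x * pd i g x - (2 * c i) * pd i g x + c i * c i := by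
      funext x; ring
    rw [hrw]
    exact ((int_GiGi i).sub ((int_Gi i).const_mul _)).add (integrable_const _)
  have int_fiFi : ∀ i, Integrable (fun x => pd i f x * (pd i g x - c i)) μ := by
    intro i
    have hrw : (fun x => pd i f x * (pd i g x - c i))
        = fun x => pd i f x * pd i g x - c i * pd i f x := by
      funext x; ring
    rw [hrw]
    exact (int_fiGi i).sub ((int_fi i).const_mul _)
  -- the commutation identity
  have hkey : ∀ (i : Fin d) (x : Euc d),
      vecL V (fun y => gradv g y - c) x i = pd i f x + pd i g x :=
    fun i x => S13.key_identity hVdef hg hpois c i x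
  -- ∫ Fi = 0
  have hFi0 : ∀ i, ∫ x, (pd i g x - c i) ∂μ = 0 := by
    intro i
    rw [integral_sub (int_Gi i) (integrable_const _), integral_const]
    simp [← hc i]
  -- ∫ ∂ᵢf = - cᵢ
  have ha : ∀ i, ∫ x, pd i f x ∂μ = - c i := by
    intro i
    have h1 := hOrth (Pi.single i 1)
    have h2 : (fun x => Pi.single i 1 ⬝ᵥ vecL V (fun y => gradv g y - c) x)
        = fun x => pd i f x + pd i g x := by
      funext x
      rw [single_dotProduct, hkey i x, one_mul]
    rw [h2, integral_add (int_fi i) (int_Gi i)] at h1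
    have h3 := hc i
    linarith
  -- abbreviations
  set S : ℝ := ∑ i, ∫ x, pd i f x * pd i f x ∂μ with hS
  set P : ℝ := ∑ i, ∫ x, (pd i g x - c i) * (pd i g x - c i) ∂μ with hP
  set T : ℝ := ∑ i, ∫ x, pd i f x * (pd i g x - c i) ∂μ with hT
  set C2 : ℝ := ∑ i, c i * c i with hC2
  -- E1 : Poincaré LHS
  have E1 : (∫ x, (gradv g x - c) ⬝ᵥ (gradv g x - c) ∂μ) = P := by
    have hrw : (fun x : Euc d => (gradv g x - c) ⬝ᵥ (gradv g x - c))
        = fun x => ∑ i, (pd i g x - c i) * (pd i g x - c i) := rfl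
    rw [hrw, integral_finset_sum _ (fun i _ => int_FiFi i)]
  -- E2 : Poincaré RHS
  have E2 : (∫ x, (gradv g x - c) ⬝ᵥ vecL V (fun y => gradv g y - c) x ∂μ) = T + P := by
    have hrw : (fun x : Euc d => (gradv g x - c) ⬝ᵥ vecL V (fun y => gradv g y - c) x)
        = fun x => ∑ i, (pd i f x * (pd i g x - c i)
            + ((pd i g x - c i) * (pd i g x - c i) + c i * (pd i g x - c i))) := by
      funext x
      show ∑ i, (pd i g x - c i) * vecL V (fun y => gradv g y - c) x i = _
      apply Finset.sum_congr rfl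
      intro i _
      rw [hkey i x]
      ring
    have intE2 : ∀ i : Fin d, Integrable (fun x => pd i f x * (pd i g x - c i)
        + ((pd i g x - c i) * (pd i g x - c i) + c i * (pd i g x - c i))) μ := fun i =>
      (int_fiFi i).add ((int_FiFi i).add ((int_Fi i).const_mul _))
    rw [hrw, integral_finset_sum _ (fun i _ => intE2 i)]
    rw [hT, hP, ← Finset.sum_add_distrib]
    apply Finset.sum_congr rfl
    intro i _
    rw [S13.integral_comb3 (int_fiFi i) (int_FiFi i) ((int_Fi i).const_mul _),
      integral_const_mul, hFi0 i]
    ring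
  -- E3 : integration by parts
  have E3 : (∫ x, f x ^ 2 ∂μ) = - T + C2 := by
    rw [hμ, S13.ibp hVdef hf hfc hg hpois, ← hμ]
    rw [integral_finset_sum _ (fun i _ => int_fiGi i)]
    have hterm : ∀ i : Fin d, (∫ x, pd i f x * pd i g x ∂μ)
        = (∫ x, pd i f x * (pd i g x - c i) ∂μ) - c i * c i := by
      intro i
      have hrw : (fun x => pd i f x * pd i g x)
          = fun x => pd i f x * (pd i g x - c i) + c i * pd i f x := by
        funext x; ring
      rw [hrw, integral_add (int_fiFi i) ((int_fi i).const_mul _), integral_const_mul, ha i]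
      ring
    rw [Finset.sum_congr rfl (fun i _ => hterm i), Finset.sum_sub_distrib]
    rw [← hT, ← hC2]
    ring
  -- E4 : Dirichlet energy of f
  have E4 : (∫ x, gradv f x ⬝ᵥ gradv f x ∂μ) = S := by
    have hrw : (fun x : Euc d => gradv f x ⬝ᵥ gradv f x)
        = fun x => ∑ i, pd i f x * pd i f x := rfl
    rw [hrw, integral_finset_sum _ (fun i _ => int_fifi i)]
  -- E5 : squared mean of the gradient
  have E5 : (∑ i, (∫ x, pd i f x ∂μ) ^ 2) = C2 := by
    rw [hC2]
    apply Finset.sum_congr rfl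
    intro i _
    rw [ha i]
    ring
  -- E6 : the (𝕃 + I) term
  have E6 : (∫ x, (vecL V (fun y => gradv g y - c) x + (gradv g x - c)) ⬝ᵥ
      (vecL V (fun y => gradv g y - c) x + (gradv g x - c)) ∂μ) = S + 4 * P + 4 * T - C2 := by
    have hrw : (fun x : Euc d => (vecL V (fun y => gradv g y - c) x + (gradv g x - c)) ⬝ᵥ
        (vecL V (fun y => gradv g y - c) x + (gradv g x - c)))
        = fun x => ∑ i, (pd i f x * pd i f x
            + 4 * ((pd i g x - c i) * (pd i g x - c i))
            + 4 * (pd i f x * (pd i g x - c i))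
            + (2 * c i) * pd i f x
            + (4 * c i) * (pd i g x - c i)
            + c i * c i) := by
      funext x
      show ∑ i, (vecL V (fun y => gradv g y - c) x i + (pd i g x - c i))
          * (vecL V (fun y => gradv g y - c) x i + (pd i g x - c i)) = _
      apply Finset.sum_congr rfl
      intro i _
      rw [hkey i x]
      ring
    have intE6 : ∀ i : Fin d, Integrable (fun x => pd i f x * pd i f x
        + 4 * ((pd i g x - c i) * (pd i g x - c i))
        + 4 * (pd i f x * (pd i g x - c i))
        + (2 * c i) * pd i f x
        + (4 * c i) * (pd i g x - c i)
        + c i * c i) μ := fun i =>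
      (((((int_fifi i).add ((int_FiFi i).const_mul _)).add
        ((int_fiFi i).const_mul _)).add ((int_fi i).const_mul _)).add
        ((int_Fi i).const_mul _)).add (integrable_const _)
    rw [hrw, integral_finset_sum _ (fun i _ => intE6 i)]
    have hterm : ∀ i : Fin d, (∫ x, (pd i f x * pd i f x
          + 4 * ((pd i g x - c i) * (pd i g x - c i))
          + 4 * (pd i f x * (pd i g x - c i))
          + (2 * c i) * pd i f x
          + (4 * c i) * (pd i g x - c i)
          + c i * c i) ∂μ)
        = (∫ x, pd i f x * pd i f x ∂μ)
          + 4 * (∫ x, (pd i g x - c i) * (pd i g x - c i) ∂μ)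
          + 4 * (∫ x, pd i f x * (pd i g x - c i) ∂μ)
          - c i * c i := by
      intro i
      rw [S13.integral_comb6 (int_fifi i) ((int_FiFi i).const_mul _)
        ((int_fiFi i).const_mul _) ((int_fi i).const_mul _) ((int_Fi i).const_mul _) _]
      rw [integral_const_mul, integral_const_mul, integral_const_mul, integral_const_mul,
        ha i, hFi0 i]
      ring
    rw [Finset.sum_congr rfl (fun i _ => hterm i)]
    simp only [Finset.sum_sub_distrib, Finset.sum_add_distrib, ← Finset.mul_sum]
    rfl
  -- conclusion
  rw [E1, E2] at hPoinc
  show (∫ x, f x ^ 2 ∂μ) - (∫ x, f x ∂μ) ^ 2 ≤ _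
  rw [hf0, E3, E4, E5, E6]
  nlinarith [hPoinc]

end
end

section
/- (Matrix computation for perturbed product potentials.) Suppose V(x) = Σ_{i=1}^d U_i(x_i) + φ(x) with U_i : ℝ → ℝ and φ : ℝ^d → ℝ smooth. Fix ε_1,…,ε_d ∈ ℝ and let h_i : ℝ → ℝ be smooth with h_i' = e^{ε_i U_i}; set H(x) = (h_1(x_1),…,h_d(x_d)). Then for every x ∈ ℝ^d, − J_{𝕃H}(x)^T (J_H(x)^T)^{-1} = ∇²φ(x) + D(x), where D(x) is the diagonal matrix with entries D_{ii}(x) = (1 − ε_i)(U_i''(x_i) + ε_i U_i'(x_i)²) + ε_i (∂_i φ(x)) U_i'(x_i). -/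
open Real MeasureTheory Matrix

noncomputable section

section Aux
variable {d : ℕ}

lemma aux_hasFDerivAt_comp_eval {f : ℝ → ℝ} {a : ℝ} {i : Fin d} {x : Euc d}
    (hf : HasDerivAt f a (x i)) :
    HasFDerivAt (fun y : Euc d => f (y i)) (a • (ContinuousLinearMap.proj i : Euc d →L[ℝ] ℝ)) x :=
  hf.comp_hasFDerivAt x ((ContinuousLinearMap.proj i : Euc d →L[ℝ] ℝ)).hasFDerivAt

lemma aux_pd_comp_eval {f : ℝ → ℝ} {a : ℝ} {i : Fin d} (j : Fin d) {x : Euc d}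
    (hf : HasDerivAt f a (x i)) :
    pd j (fun y => f (y i)) x = if i = j then a else 0 := by
  rw [pd, (aux_hasFDerivAt_comp_eval hf).fderiv]
  simp [Pi.single_apply, mul_ite]

lemma aux_pd_zero (j : Fin d) (x : Euc d) : pd j (fun _ => (0:ℝ)) x = 0 := by
  simp [pd]

lemma aux_contDiff_pd (i : Fin d) {f : Euc d → ℝ} (hf : ContDiff ℝ (⊤:ℕ∞) f) :
    ContDiff ℝ (⊤:ℕ∞) (pd i f) :=
  (hf.fderiv_right (by exact_mod_cast le_top)).clm_apply contDiff_const

end Aux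

/-- matrix computation for perturbed product potentials. -/
theorem stmt_16 {d : ℕ} (hd : 1 ≤ d)
    (U : Fin d → ℝ → ℝ) (hU : ∀ i, ContDiff ℝ (⊤ : ℕ∞) (U i))
    (φ : Euc d → ℝ) (hφ : ContDiff ℝ (⊤ : ℕ∞) φ)
    (ε : Fin d → ℝ)
    (h : Fin d → ℝ → ℝ) (hh : ∀ i, ContDiff ℝ (⊤ : ℕ∞) (h i))
    (hh' : ∀ i y, deriv (h i) y = Real.exp (ε i * U i y))
    (V : Euc d → ℝ) (hVdef : ∀ x, V x = (∑ i, U i (x i)) + φ x)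
    (H : Euc d → Euc d) (hHdef : ∀ x i, H x i = h i (x i))
    (x : Euc d) :
    -(jac (vecL V H) x)ᵀ * ((jac H x)ᵀ)⁻¹
      = hessM φ x + Matrix.diagonal (fun i =>
          (1 - ε i) * (deriv (deriv (U i)) (x i) + ε i * deriv (U i) (x i) ^ 2)
          + ε i * pd i φ x * deriv (U i) (x i)) := by
  classical
  have hUd : ∀ i, Differentiable ℝ (U i) := fun i => (hU i).differentiable (by simp)
  have hU'd : ∀ i, Differentiable ℝ (deriv (U i)) := fun i =>
    ((contDiff_infty_iff_deriv.mp (hU i)).2).differentiable (by simp)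
  have hφd : Differentiable ℝ φ := hφ.differentiable (by simp)
  have hpdφd : ∀ i, Differentiable ℝ (pd i φ) := fun i =>
    (aux_contDiff_pd i hφ).differentiable (by simp)
  have hhd : ∀ i, Differentiable ℝ (h i) := fun i => (hh i).differentiable (by simp)
  -- derivative of the function t ↦ exp (ε i * U i t)
  have hExp : ∀ (i : Fin d) (t : ℝ),
      HasDerivAt (fun s => Real.exp (ε i * U i s))
        (Real.exp (ε i * U i t) * (ε i * deriv (U i) t)) t := fun i t =>
    (((hUd i t).hasDerivAt.const_mul (ε i)).exp)
  have hDh : ∀ (i : Fin d) (t : ℝ),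
      HasDerivAt (deriv (h i)) (Real.exp (ε i * U i t) * (ε i * deriv (U i) t)) t := by
    intro i t
    have : deriv (h i) = fun s => Real.exp (ε i * U i s) := funext (hh' i)
    rw [this]; exact hExp i t
  -- the jacobian of H
  have hHfun : ∀ i : Fin d, (fun y : Euc d => H y i) = fun y : Euc d => h i (y i) :=
    fun i => funext fun y => hHdef y i
  have hjacH : jac H x = Matrix.diagonal (fun i => Real.exp (ε i * U i (x i))) := by
    ext i j
    rw [jac, Matrix.of_apply, hHfun i,
      aux_pd_comp_eval j ((hhd i) (x i)).hasDerivAt, hh' i]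
    by_cases hij : i = j
    · subst hij; simp [Matrix.diagonal_apply]
    · simp [Matrix.diagonal_apply, hij]
  have hinv : ((jac H x)ᵀ)⁻¹
      = Matrix.diagonal (fun i => Real.exp (-(ε i * U i (x i)))) := by
    rw [hjacH, Matrix.diagonal_transpose]
    apply Matrix.inv_eq_right_inv
    rw [Matrix.diagonal_mul_diagonal]
    have : (fun i => Real.exp (ε i * U i (x i)) * Real.exp (-(ε i * U i (x i))))
        = fun _ => (1:ℝ) := funext fun i => by rw [← Real.exp_add]; simp
    rw [this, Matrix.diagonal_one]
  -- pd of V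
  have hpdV : ∀ (i : Fin d) (y : Euc d), pd i V y = deriv (U i) (y i) + pd i φ y := by
    intro i y
    have hVfun : V = fun z : Euc d => (∑ j, U j (z j)) + φ z := funext hVdef
    have hs : HasFDerivAt (fun z : Euc d => ∑ j, U j (z j))
        (∑ j, (deriv (U j) (y j)) • (ContinuousLinearMap.proj j : Euc d →L[ℝ] ℝ)) y :=
      HasFDerivAt.fun_sum (fun j _ => aux_hasFDerivAt_comp_eval ((hUd j (y j)).hasDerivAt))
    have htot := hs.fun_add (hφd y).hasFDerivAt
    rw [hVfun, pd, htot.fderiv]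
    simp only [ContinuousLinearMap.add_apply, ContinuousLinearMap.sum_apply,
      ContinuousLinearMap.smul_apply, ContinuousLinearMap.proj_apply,
      Pi.single_apply, smul_eq_mul, mul_ite, mul_one, mul_zero]
    rw [Finset.sum_ite_eq' Finset.univ i (fun j => deriv (U j) (y j))]
    simp [pd]
  -- the explicit formula for vecL V H
  set G : Fin d → Euc d → ℝ := fun i y =>
    Real.exp (ε i * U i (y i)) * ((ε i - 1) * deriv (U i) (y i) - pd i φ y) with hG
  have hvecL : ∀ (i : Fin d) (y : Euc d), vecL V H y i = G i y := by
    intro i y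
    have hinner : ∀ k : Fin d, (pd k (fun z : Euc d => h i (z i)))
        = fun z : Euc d => if i = k then deriv (h i) (z i) else 0 :=
      fun k => funext fun z => aux_pd_comp_eval k ((hhd i) (z i)).hasDerivAt
    have hsum : ∑ k, pd k (pd k (fun z : Euc d => h i (z i))) y
        = Real.exp (ε i * U i (y i)) * (ε i * deriv (U i) (y i)) := by
      rw [Finset.sum_eq_single i]
      · rw [hinner i]
        have he : (fun z : Euc d => if i = i then deriv (h i) (z i) else 0)
            = fun z : Euc d => deriv (h i) (z i) := by
          funext z; rw [if_pos rfl]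
        rw [he, aux_pd_comp_eval i (hDh i (y i))]
        simp
      · intro k _ hk
        rw [hinner k]
        have he : (fun z : Euc d => if i = k then deriv (h i) (z i) else 0)
            = fun _ : Euc d => (0:ℝ) := by
          funext z; rw [if_neg (fun hik => hk (hik ▸ rfl) : ¬ i = k)]
        rw [he]
        exact aux_pd_zero k y
      · simp
    have hdot : gradv V y ⬝ᵥ gradv (fun z : Euc d => h i (z i)) y
        = (deriv (U i) (y i) + pd i φ y) * deriv (h i) (y i) := by
      rw [dotProduct]
      rw [Finset.sum_eq_single i]
      · simp only [gradv]
        rw [hpdV i y, aux_pd_comp_eval i ((hhd i) (y i)).hasDerivAt, if_pos rfl]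
      · intro k _ hk
        simp only [gradv]
        rw [aux_pd_comp_eval k ((hhd i) (y i)).hasDerivAt,
          if_neg (fun hik => hk (hik ▸ rfl) : ¬ i = k), mul_zero]
      · simp
    rw [vecL, Lop, hHfun i, hsum, hdot, hh' i, hG]
    ring
  -- derivative of G
  have hpdG : ∀ i j : Fin d, pd j (G i) x
      = Real.exp (ε i * U i (x i)) *
          ((ε i - 1) * (deriv (deriv (U i)) (x i) * (if i = j then 1 else 0))
            - pd j (pd i φ) x)
        + ((ε i - 1) * deriv (U i) (x i) - pd i φ x) *
          (Real.exp (ε i * U i (x i)) * (ε i * deriv (U i) (x i)) * (if i = j then 1 else 0)) := by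
    intro i j
    have hE : HasFDerivAt (fun y : Euc d => Real.exp (ε i * U i (y i)))
        ((Real.exp (ε i * U i (x i)) * (ε i * deriv (U i) (x i))) •
          (ContinuousLinearMap.proj i : Euc d →L[ℝ] ℝ)) x :=
      aux_hasFDerivAt_comp_eval (hExp i (x i))
    have hc1 : HasFDerivAt (fun y : Euc d => deriv (U i) (y i))
        ((deriv (deriv (U i)) (x i)) • (ContinuousLinearMap.proj i : Euc d →L[ℝ] ℝ)) x :=
      aux_hasFDerivAt_comp_eval ((hU'd i (x i)).hasDerivAt)
    have hc : HasFDerivAt (fun y : Euc d => (ε i - 1) * deriv (U i) (y i) - pd i φ y)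
        ((ε i - 1) • ((deriv (deriv (U i)) (x i)) •
            (ContinuousLinearMap.proj i : Euc d →L[ℝ] ℝ))
          - fderiv ℝ (pd i φ) x) x :=
      (hc1.const_mul (ε i - 1)).sub (hpdφd i x).hasFDerivAt
    have hGd := hE.fun_mul hc
    rw [pd, hG, hGd.fderiv]
    simp only [ContinuousLinearMap.add_apply, ContinuousLinearMap.smul_apply,
      ContinuousLinearMap.sub_apply, ContinuousLinearMap.proj_apply,
      Pi.single_apply, smul_eq_mul]
    have : fderiv ℝ (pd i φ) x (Pi.single j 1) = pd j (pd i φ) x := rfl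
    rw [this]
  -- assemble
  rw [hinv]
  ext i j
  have hGfun : (fun y : Euc d => vecL V H y j) = G j := funext fun y => hvecL j y
  rw [Matrix.mul_apply]
  simp only [Matrix.neg_apply, Matrix.transpose_apply, Matrix.diagonal_apply,
    mul_ite, mul_zero]
  rw [Finset.sum_ite_eq' Finset.univ j
    (fun k => -(jac (vecL V H) x k i) * Real.exp (-(ε k * U k (x k))))]
  simp only [Finset.mem_univ, if_pos]
  rw [jac, Matrix.of_apply, hGfun, hpdG j i]
  rw [Matrix.add_apply, hessM, Matrix.of_apply, Matrix.diagonal_apply]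
  by_cases hij : i = j
  · subst hij
    simp only [if_pos rfl, if_true]
    rw [Real.exp_neg]
    field_simp
    ring
  · simp only [if_neg hij, if_neg (fun hji => hij (hji ▸ rfl) : ¬ j = i)]
    rw [Real.exp_neg]
    field_simp
    ring

end
end

section
/- (Key matrix lower bound for Proposition 4.1.) Let U_1,…,U_d : ℝ → ℝ be smooth and convex and φ : ℝ^d → ℝ smooth. Assume there are constants c_1 ∈ ℝ, c_2 > 0, γ > 0 and ε_1,…,ε_d ∈ (0,1/2) such that: ∇²φ(x) ⪰ c_1·I for all x; |∂_i φ(x)| ≤ c_2 for all x and all i; and (1 − 3ε_i/2)(1 − 2ε_i)² (U_i''(y) + ε_i U_i'(y)²) ≥ γ for all y ∈ ℝ and all i. Then for every x ∈ ℝ^d, the symmetric matrix ∇²φ(x) + D(x), where D(x) is diagonal with entries D_{ii}(x) = (1 − ε_i)(U_i''(x_i) + ε_i U_i'(x_i)²) + ε_i (∂_i φ(x)) U_i'(x_i), satisfies ∇²φ(x) + D(x) ⪰ (γ + c_1 − c_2²/2)·I. -/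
open Real MeasureTheory Matrix

noncomputable section

/-- A monotone function has nonnegative derivative at points of differentiability. -/
lemma monotone_deriv_nonneg' {g : ℝ → ℝ} (hm : Monotone g) (y : ℝ)
    (hg : DifferentiableAt ℝ g y) : 0 ≤ deriv g y := by
  have h := hg.hasDerivAt
  rw [hasDerivAt_iff_tendsto_slope] at h
  refine ge_of_tendsto h ?_
  filter_upwards [self_mem_nhdsWithin] with z hz
  have hz' : z ≠ y := hz
  rcases lt_or_gt_of_ne hz' with h1 | h1
  · rw [slope_def_field]
    have hnum : g z - g y ≤ 0 := sub_nonpos.2 (hm h1.le)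
    have hden : z - y < 0 := sub_neg.2 h1
    rw [div_nonneg_iff]
    exact Or.inr ⟨hnum, hden.le⟩
  · rw [slope_def_field]
    have hnum : 0 ≤ g z - g y := sub_nonneg.2 (hm h1.le)
    have hden : 0 < z - y := sub_pos.2 h1
    exact div_nonneg hnum hden.le

/-- key matrix lower bound: `∇²φ(x) + D(x) ⪰ (γ + c₁ - c₂²/2)·I`. -/
theorem stmt_17 {d : ℕ} (hd : 1 ≤ d)
    (U : Fin d → ℝ → ℝ) (hU : ∀ i, ContDiff ℝ (⊤ : ℕ∞) (U i))
    (hUconv : ∀ i, ConvexOn ℝ Set.univ (U i))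
    (φ : Euc d → ℝ) (hφ : ContDiff ℝ (⊤ : ℕ∞) φ)
    (c₁ c₂ γ : ℝ) (hc₂ : 0 < c₂) (hγ : 0 < γ)
    (ε : Fin d → ℝ) (hε : ∀ i, ε i ∈ Set.Ioo (0 : ℝ) (1 / 2))
    (hφlb : ∀ x : Euc d,
      (hessM φ x - c₁ • (1 : Matrix (Fin d) (Fin d) ℝ)).PosSemidef)
    (hφgrad : ∀ (x : Euc d) (i : Fin d), |pd i φ x| ≤ c₂)
    (hUlb : ∀ (i : Fin d) (y : ℝ),
      γ ≤ (1 - 3 * ε i / 2) * (1 - 2 * ε i) ^ 2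
        * (deriv (deriv (U i)) y + ε i * deriv (U i) y ^ 2))
    (x : Euc d) :
    ((hessM φ x + Matrix.diagonal (fun i =>
        (1 - ε i) * (deriv (deriv (U i)) (x i) + ε i * deriv (U i) (x i) ^ 2)
        + ε i * pd i φ x * deriv (U i) (x i)))
      - (γ + c₁ - c₂ ^ 2 / 2) • (1 : Matrix (Fin d) (Fin d) ℝ)).PosSemidef := by
  set D : Fin d → ℝ := fun i =>
    (1 - ε i) * (deriv (deriv (U i)) (x i) + ε i * deriv (U i) (x i) ^ 2)
      + ε i * pd i φ x * deriv (U i) (x i) with hD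
  have hrw : (hessM φ x + Matrix.diagonal D)
      - (γ + c₁ - c₂ ^ 2 / 2) • (1 : Matrix (Fin d) (Fin d) ℝ)
      = (hessM φ x - c₁ • (1 : Matrix (Fin d) (Fin d) ℝ))
        + Matrix.diagonal (fun i => D i - (γ - c₂ ^ 2 / 2)) := by
    ext i j
    by_cases hij : i = j
    · subst hij
      simp [Matrix.add_apply, Matrix.sub_apply, Matrix.smul_apply, Matrix.one_apply,
        Matrix.diagonal_apply_eq]
      ring
    · simp [Matrix.add_apply, Matrix.sub_apply, Matrix.smul_apply, Matrix.one_apply_ne hij,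
        Matrix.diagonal_apply_ne _ hij]
  rw [hrw]
  refine (hφlb x).add (Matrix.posSemidef_diagonal_iff.mpr fun i => ?_)
  -- notation
  obtain ⟨hε0, hε2⟩ := hε i
  set e := ε i
  set a := deriv (deriv (U i)) (x i) with ha'
  set b := deriv (U i) (x i) with hb'
  set p := pd i φ x with hp'
  -- second derivative nonneg by convexity
  have hUdiff : Differentiable ℝ (U i) := (hU i).differentiable (by simp)
  have hU'cd : ContDiff ℝ (⊤ : ℕ∞) (deriv (U i)) := (contDiff_infty_iff_deriv.mp (hU i)).2
  have hmono : Monotone (deriv (U i)) := by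
    have := (hUconv i).monotoneOn_deriv (fun y _ => hUdiff.differentiableAt)
    rwa [monotoneOn_univ] at this
  have hA : 0 ≤ a := monotone_deriv_nonneg' hmono (x i) (hU'cd.differentiable (by simp) _)
  -- hypotheses on this coordinate
  have hkey : γ ≤ (1 - 3 * e / 2) * (1 - 2 * e) ^ 2 * (a + e * b ^ 2) := hUlb i (x i)
  have hpb : |p| ≤ c₂ := hφgrad x i
  have hp1 : -c₂ ≤ p := neg_le_of_abs_le hpb
  have hp2 : p ≤ c₂ := le_of_abs_le hpb
  -- AM-GM bound for the cross term: e*p*b ≥ -(c₂^2 + e^2*b^2)/2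
  have hcross : -(c₂ ^ 2 + e ^ 2 * b ^ 2) / 2 ≤ e * p * b := by
    nlinarith [mul_nonneg (sub_nonneg.2 hp2) (sq_nonneg (c₂ - e * b)),
      mul_nonneg (by linarith : (0:ℝ) ≤ c₂ + p) (sq_nonneg (c₂ + e * b)), hc₂]
  -- coefficient comparisons
  have hk1 : (1 - 3 * e / 2) * (1 - 2 * e) ^ 2 ≤ 1 - e := by nlinarith [sq_nonneg e]
  have hk2 : (1 - 3 * e / 2) * (1 - 2 * e) ^ 2 ≤ 1 - 3 * e / 2 := by
    nlinarith [sq_nonneg (1 - 2 * e)]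
  have h1 : γ ≤ (1 - e) * a + (1 - 3 * e / 2) * (e * b ^ 2) := by
    have t1 : (1 - 3 * e / 2) * (1 - 2 * e) ^ 2 * a ≤ (1 - e) * a :=
      mul_le_mul_of_nonneg_right hk1 hA
    have t2 : (1 - 3 * e / 2) * (1 - 2 * e) ^ 2 * (e * b ^ 2)
        ≤ (1 - 3 * e / 2) * (e * b ^ 2) :=
      mul_le_mul_of_nonneg_right hk2 (mul_nonneg hε0.le (sq_nonneg b))
    nlinarith [hkey]
  show 0 ≤ D i - (γ - c₂ ^ 2 / 2)
  have hDi : D i = (1 - e) * (a + e * b ^ 2) + e * p * b := rfl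
  rw [hDi]
  nlinarith [hcross, h1, sq_nonneg (e * b)]

end
end
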